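/- For each k, let h^{L(k)} and h^{R(k)} be left and right half-edge vectors of common length N(k), built from degree vectors with n(k) distinct left labels and m(k) distinct right labels, and let B_π(k) be the bipartite multigraph induced by a uniformly random permutation π_k ∈ S_{N(k)}. If n(k) → ∞, m(k) → ∞ and N(k) → ∞, then for every integer s ≥ 2 the law of the induced permutation of a uniform random s-edge sample of B_π(k) converges to the uniform distribution on S_s as k → ∞; that is, the sequence (B_π(k)) is asymptotically block-free. -/
import Mathlib


open Finset

namespace FourPointTest

variable {N n m : ℕ}

/-- The set of ways to list the edges of the sample `A` (an `s`-subset of edge indices)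
in an order that is nondecreasing by left endpoint. -/
def leftOrds (e : Fin N → Fin n × Fin m) (s : ℕ) (A : Finset (Fin N)) :
    Finset (Fin s → Fin N) :=
  Finset.univ.filter fun g =>
    Function.Injective g ∧ (∀ i, g i ∈ A) ∧
      ∀ i j : Fin s, i ≤ j → (e (g i)).1 ≤ (e (g j)).1

/-- Given a listing `g` of sampled edges (sorted by left endpoint), the set of permutations
`σ` for which the right endpoints `v_{σ(1)} ≤ … ≤ v_{σ(s)}` are nondecreasing. -/
def rightPerms (e : Fin N → Fin n × Fin m) (s : ℕ) (g : Fin s → Fin N) :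
    Finset (Equiv.Perm (Fin s)) :=
  Finset.univ.filter fun σ : Equiv.Perm (Fin s) =>
    ∀ i j : Fin s, i ≤ j → (e (g (σ i))).2 ≤ (e (g (σ j))).2

/-- The probability that the induced permutation of a uniform random `s`-edge sample of the
bipartite multigraph with edge list `e` equals `σ`: choose an `s`-subset of edges uniformly,
then a uniform ordering of it that is nondecreasing by left endpoint, then a uniform
`σ` among those making the right endpoints nondecreasing. -/
noncomputable def inducedProb (e : Fin N → Fin n × Fin m) (s : ℕ)
    (σ : Equiv.Perm (Fin s)) : ℝ :=
  ((N.choose s : ℝ))⁻¹ *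
    ∑ A ∈ Finset.powersetCard s (Finset.univ : Finset (Fin N)),
      ((leftOrds e s A).card : ℝ)⁻¹ *
        ∑ g ∈ leftOrds e s A,
          ((rightPerms e s g).card : ℝ)⁻¹ * (if σ ∈ rightPerms e s g then (1 : ℝ) else 0)

/-- helper: set of permutations making `hR ∘ h ∘ σ` nondecreasing. -/
def RSet (hR : Fin N → Fin m) (s : ℕ) (h : Fin s → Fin N) : Finset (Equiv.Perm (Fin s)) :=
  Finset.univ.filter fun σ : Equiv.Perm (Fin s) =>
    ∀ i j : Fin s, i ≤ j → hR (h (σ i)) ≤ hR (h (σ j))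

lemma RSet_nonempty (hR : Fin N → Fin m) (s : ℕ) (h : Fin s → Fin N) :
    (RSet hR s h).Nonempty := by
  refine ⟨Tuple.sort (fun i => hR (h i)), ?_⟩
  simp only [RSet, mem_filter, mem_univ, true_and]
  intro i j hij
  exact Tuple.monotone_sort (fun i => hR (h i)) hij

lemma mem_RSet_comp (hR : Fin N → Fin m) (s : ℕ) (h : Fin s → Fin N)
    (ρ σ : Equiv.Perm (Fin s)) :
    σ ∈ RSet hR s (h ∘ ρ) ↔ ρ * σ ∈ RSet hR s h := by
  simp [RSet, Function.comp, Equiv.Perm.mul_apply]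

lemma card_RSet_comp (hR : Fin N → Fin m) (s : ℕ) (h : Fin s → Fin N)
    (ρ : Equiv.Perm (Fin s)) :
    (RSet hR s (h ∘ ρ)).card = (RSet hR s h).card := by
  refine Finset.card_bij' (fun σ _ => ρ * σ) (fun σ _ => ρ⁻¹ * σ) ?_ ?_ ?_ ?_
  · intro σ hσ; exact (mem_RSet_comp hR s h ρ σ).1 hσ
  · intro σ hσ; rw [mem_RSet_comp]; simpa [mul_assoc] using hσ
  · intro σ _; group
  · intro σ _; group

noncomputable def Fval (hR : Fin N → Fin m) (s : ℕ) (σ : Equiv.Perm (Fin s))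
    (h : Fin s → Fin N) : ℝ :=
  ((RSet hR s h).card : ℝ)⁻¹ * (if σ ∈ RSet hR s h then (1 : ℝ) else 0)

lemma Fval_comp (hR : Fin N → Fin m) (s : ℕ) (σ ρ : Equiv.Perm (Fin s))
    (h : Fin s → Fin N) : Fval hR s σ (h ∘ ρ) = Fval hR s (ρ * σ) h := by
  rw [Fval, Fval, card_RSet_comp, if_congr (mem_RSet_comp hR s h ρ σ) rfl rfl]

lemma sum_Fval (hR : Fin N → Fin m) (s : ℕ) (h : Fin s → Fin N) :
    ∑ σ : Equiv.Perm (Fin s), Fval hR s σ h = 1 := by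
  have hcard : (0 : ℝ) < ((RSet hR s h).card : ℝ) := by
    exact_mod_cast Finset.card_pos.2 (RSet_nonempty hR s h)
  simp only [Fval]
  rw [← Finset.mul_sum]
  · rw [Finset.sum_boole]
    have : Finset.univ.filter (fun σ => σ ∈ RSet hR s h) = RSet hR s h := by
      ext σ; simp
    rw [this]
    exact inv_mul_cancel₀ (ne_of_gt hcard)

lemma exists_perm_extend {N s : ℕ} (g₀ g : Fin s → Fin N) (h₀ : Function.Injective g₀)
    (h : Function.Injective g) : ∃ τ : Equiv.Perm (Fin N), ∀ i, τ (g₀ i) = g i := by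
  classical
  have hc : Fintype.card ↥(Set.range g₀)ᶜ = Fintype.card ↥(Set.range g)ᶜ := by
    rw [Fintype.card_compl_set, Fintype.card_compl_set,
      Fintype.card_congr (Equiv.ofInjective g₀ h₀).symm,
      Fintype.card_congr (Equiv.ofInjective g h).symm]
  refine ⟨(Equiv.Set.sumCompl (Set.range g₀)).symm.trans
    ((Equiv.sumCongr ((Equiv.ofInjective g₀ h₀).symm.trans (Equiv.ofInjective g h))
      (Fintype.equivOfCardEq hc)).trans (Equiv.Set.sumCompl (Set.range g))), fun i => ?_⟩
  rw [Equiv.trans_apply, Equiv.trans_apply,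
    Equiv.Set.sumCompl_symm_apply_of_mem (Set.mem_range_self i)]
  simp

lemma sum_perm_Fval_eq (hR : Fin N → Fin m) {s : ℕ} (hs : s ≤ N)
    (σ : Equiv.Perm (Fin s)) (g : Fin s → Fin N) (hg : Function.Injective g) :
    ∑ π : Equiv.Perm (Fin N), Fval hR s σ (π ∘ g)
      = ∑ π : Equiv.Perm (Fin N), Fval hR s σ (π ∘ Fin.castLE hs) := by
  obtain ⟨τ, hτ⟩ := exists_perm_extend (Fin.castLE hs) g (Fin.castLE_injective hs) hg
  have key := Equiv.sum_comp (Equiv.mulRight τ)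
    (fun π : Equiv.Perm (Fin N) => Fval hR s σ (π ∘ Fin.castLE hs))
  rw [← key]
  refine Finset.sum_congr rfl fun π _ => ?_
  congr 1
  funext i
  simp only [Equiv.coe_mulRight, Function.comp_apply, Equiv.Perm.mul_apply, hτ i]

lemma sum_perm_Fval_const (hR : Fin N → Fin m) {s : ℕ} (hs : s ≤ N)
    (σ σ' : Equiv.Perm (Fin s)) :
    ∑ π : Equiv.Perm (Fin N), Fval hR s σ (π ∘ Fin.castLE hs)
      = ∑ π : Equiv.Perm (Fin N), Fval hR s σ' (π ∘ Fin.castLE hs) := by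
  have key : ∀ ρ σ₀ : Equiv.Perm (Fin s),
      ∑ π : Equiv.Perm (Fin N), Fval hR s (ρ * σ₀) (π ∘ Fin.castLE hs)
        = ∑ π : Equiv.Perm (Fin N), Fval hR s σ₀ (π ∘ Fin.castLE hs) := by
    intro ρ σ₀
    have hinj : Function.Injective (Fin.castLE hs ∘ ρ) :=
      (Fin.castLE_injective hs).comp ρ.injective
    have h1 := sum_perm_Fval_eq hR hs σ₀ (Fin.castLE hs ∘ ρ) hinj
    calc ∑ π : Equiv.Perm (Fin N), Fval hR s (ρ * σ₀) (π ∘ Fin.castLE hs)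
        = ∑ π : Equiv.Perm (Fin N), Fval hR s σ₀ ((π ∘ Fin.castLE hs) ∘ ρ) := by
          refine Finset.sum_congr rfl fun π _ => ?_
          rw [Fval_comp]
      _ = ∑ π : Equiv.Perm (Fin N), Fval hR s σ₀ (π ∘ (Fin.castLE hs ∘ ρ)) := rfl
      _ = _ := h1
  have := key (σ * σ'⁻¹) σ'
  simpa [mul_assoc] using this

lemma sum_perm_Fval_value (hR : Fin N → Fin m) {s : ℕ} (hs : s ≤ N)
    (σ : Equiv.Perm (Fin s)) :
    ∑ π : Equiv.Perm (Fin N), Fval hR s σ (π ∘ Fin.castLE hs)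
      = (N.factorial : ℝ) / (s.factorial : ℝ) := by
  have hsum : ∑ σ' : Equiv.Perm (Fin s), ∑ π : Equiv.Perm (Fin N),
      Fval hR s σ' (π ∘ Fin.castLE hs) = (N.factorial : ℝ) := by
    rw [Finset.sum_comm]
    have : ∀ π : Equiv.Perm (Fin N),
        ∑ σ' : Equiv.Perm (Fin s), Fval hR s σ' (π ∘ Fin.castLE hs) = 1 :=
      fun π => sum_Fval hR s _
    rw [Finset.sum_congr rfl fun π _ => this π]
    simp [Finset.card_univ, Fintype.card_perm]
  have hconst : ∑ σ' : Equiv.Perm (Fin s), ∑ π : Equiv.Perm (Fin N),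
      Fval hR s σ' (π ∘ Fin.castLE hs)
        = (s.factorial : ℝ) * ∑ π : Equiv.Perm (Fin N), Fval hR s σ (π ∘ Fin.castLE hs) := by
    rw [Finset.sum_congr rfl fun σ' _ => sum_perm_Fval_const hR hs σ' σ]
    simp [Finset.card_univ, Fintype.card_perm, mul_comm]
  rw [hconst] at hsum
  have hfac : (s.factorial : ℝ) ≠ 0 := by exact_mod_cast s.factorial_ne_zero
  field_simp at hsum ⊢
  linarith [hsum]

-- π-independence of leftOrds
lemma leftOrds_eq (hL : Fin N → Fin n) (hR : Fin N → Fin m) (π : Equiv.Perm (Fin N))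
    (s : ℕ) (A : Finset (Fin N)) :
    leftOrds (fun p => (hL p, hR (π p))) s A
      = leftOrds (fun p => (hL p, hR p)) s A := by
  ext g; simp [leftOrds]

lemma rightPerms_eq (hL : Fin N → Fin n) (hR : Fin N → Fin m) (π : Equiv.Perm (Fin N))
    (s : ℕ) (g : Fin s → Fin N) :
    rightPerms (fun p => (hL p, hR (π p))) s g = RSet hR s (π ∘ g) := by
  ext σ; simp [rightPerms, RSet, Function.comp]

lemma leftOrds_nonempty (hL : Fin N → Fin n) (hR : Fin N → Fin m)
    {s : ℕ} {A : Finset (Fin N)} (hA : A.card = s) :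
    (leftOrds (fun p => (hL p, hR p)) s A).Nonempty := by
  classical
  set f : Fin s → Fin N := fun i => ((A.orderIsoOfFin hA) i : Fin N) with hf
  have hfinj : Function.Injective f := fun i j hij => by
    have := Subtype.ext hij
    exact (A.orderIsoOfFin hA).injective this
  set τ := Tuple.sort (fun i => hL (f i)) with hτ
  refine ⟨f ∘ τ, ?_⟩
  simp only [leftOrds, mem_filter, mem_univ, true_and]
  refine ⟨hfinj.comp τ.injective, fun i => (A.orderIsoOfFin hA (τ i)).2, ?_⟩
  intro i j hij
  exact Tuple.monotone_sort (fun i => hL (f i)) hij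

lemma mem_leftOrds_inj {e : Fin N → Fin n × Fin m} {s : ℕ} {A : Finset (Fin N)}
    {g : Fin s → Fin N} (hg : g ∈ leftOrds e s A) : Function.Injective g := by
  simp only [leftOrds, mem_filter] at hg
  exact hg.2.1

lemma avg (hL : Fin N → Fin n) (hR : Fin N → Fin m) {s : ℕ} (hs : s ≤ N)
    (σ : Equiv.Perm (Fin s)) :
    ((Nat.factorial N : ℝ))⁻¹ *
      ∑ π : Equiv.Perm (Fin N), inducedProb (fun p => (hL p, hR (π p))) s σ
        = 1 / (Nat.factorial s : ℝ) := by
  classical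
  set L : Finset (Fin N) → Finset (Fin s → Fin N) :=
    fun A => leftOrds (fun p => (hL p, hR p)) s A with hLdef
  have step1 : ∀ π : Equiv.Perm (Fin N),
      inducedProb (fun p => (hL p, hR (π p))) s σ
        = ((N.choose s : ℝ))⁻¹ *
            ∑ A ∈ Finset.powersetCard s (Finset.univ : Finset (Fin N)),
              ((L A).card : ℝ)⁻¹ * ∑ g ∈ L A, Fval hR s σ (π ∘ g) := by
    intro π
    unfold inducedProb
    congr 1
  rw [Finset.sum_congr rfl fun π _ => step1 π, ← Finset.mul_sum, Finset.sum_comm]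
  have hA' : ∀ A ∈ Finset.powersetCard s (Finset.univ : Finset (Fin N)),
      ∑ π : Equiv.Perm (Fin N),
          ((L A).card : ℝ)⁻¹ * ∑ g ∈ L A, Fval hR s σ (π ∘ g)
        = (Nat.factorial N : ℝ) / (Nat.factorial s : ℝ) := by
    intro A hA
    rw [← Finset.mul_sum, Finset.sum_comm]
    have hg' : ∀ g ∈ L A, ∑ π : Equiv.Perm (Fin N), Fval hR s σ (π ∘ g)
        = (Nat.factorial N : ℝ) / (Nat.factorial s : ℝ) := fun g hg => by
      rw [sum_perm_Fval_eq hR hs σ g (mem_leftOrds_inj hg), sum_perm_Fval_value hR hs σ]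
    rw [Finset.sum_congr rfl hg', Finset.sum_const, nsmul_eq_mul]
    have hne : (L A).Nonempty :=
      leftOrds_nonempty hL hR (Finset.mem_powersetCard.1 hA).2
    have hcard : ((L A).card : ℝ) ≠ 0 := by
      exact_mod_cast (Finset.card_pos.2 hne).ne'
    rw [← mul_assoc, inv_mul_cancel₀ hcard, one_mul]
  rw [Finset.sum_congr rfl hA', Finset.sum_const, nsmul_eq_mul]
  have hcardpow : ((Finset.powersetCard s (Finset.univ : Finset (Fin N))).card : ℝ)
      = (N.choose s : ℝ) := by
    rw [Finset.card_powersetCard]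
    simp
  rw [hcardpow]
  have h1 : (N.choose s : ℝ) ≠ 0 := by
    exact_mod_cast (Nat.choose_pos hs).ne'
  have h2 : (Nat.factorial N : ℝ) ≠ 0 := by exact_mod_cast N.factorial_ne_zero
  have h3 : (Nat.factorial s : ℝ) ≠ 0 := by exact_mod_cast s.factorial_ne_zero
  field_simp

/-- **The half-edge construction driven by a uniform random permutation is asymptotically
block-free.**  A left half-edge vector of length `N` built from a positive degree vector on
`n` labels is exactly a monotone surjection `Fin N → Fin n` (each label `u_i` listed with
multiplicity `w_i`, in increasing order), and similarly on the right.  For a permutation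
`π ∈ S_N` the induced bipartite multigraph `B_π` has edge list `p ↦ (h^L_p, h^R_{π(p)})`.
If `n(k), m(k), N(k) → ∞` and `π_k` is uniform on `S_{N(k)}`, then for every `s ≥ 2` the law
of the induced permutation of a uniform random `s`-edge sample converges to the uniform
distribution on `S_s`. -/
theorem halfEdge_asymptotically_block_free
    (n m N : ℕ → ℕ)
    (hL : ∀ k, Fin (N k) → Fin (n k)) (hR : ∀ k, Fin (N k) → Fin (m k))
    (hLmono : ∀ k, Monotone (hL k)) (hLsurj : ∀ k, Function.Surjective (hL k))
    (hRmono : ∀ k, Monotone (hR k)) (hRsurj : ∀ k, Function.Surjective (hR k))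
    (hn : Filter.Tendsto n Filter.atTop Filter.atTop)
    (hm : Filter.Tendsto m Filter.atTop Filter.atTop)
    (hN : Filter.Tendsto N Filter.atTop Filter.atTop) :
    ∀ s : ℕ, 2 ≤ s → ∀ σ : Equiv.Perm (Fin s),
      Filter.Tendsto
        (fun k => ((Nat.factorial (N k) : ℝ))⁻¹ *
          ∑ π : Equiv.Perm (Fin (N k)),
            inducedProb (fun p => (hL k p, hR k (π p))) s σ)
        Filter.atTop (nhds (1 / (Nat.factorial s : ℝ))) := by
  intro s hs σ
  have hev : ∀ᶠ k in Filter.atTop, s ≤ N k := hN.eventually_ge_atTop s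
  have heq : (fun k => ((Nat.factorial (N k) : ℝ))⁻¹ *
      ∑ π : Equiv.Perm (Fin (N k)),
        inducedProb (fun p => (hL k p, hR k (π p))) s σ)
      =ᶠ[Filter.atTop] fun _ => 1 / (Nat.factorial s : ℝ) := by
    filter_upwards [hev] with k hk
    exact avg (hL k) (hR k) hk σ
  exact Filter.Tendsto.congr' heq.symm tendsto_const_nhds

end FourPointTest
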